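/- Let F : ℝ^d → ℝ^d be continuously differentiable on a neighborhood of a point ω* with F(ω*) = ω*, let u ∈ ℝ^d be a unit vector, Π := I − u·uᵀ the orthogonal projection onto the orthogonal complement of u, let H : ℝ^d → ℝ^d be a symmetric linear map, γ > 0, and suppose the derivative of F at ω* equals Π∘(I − (1/γ)H). Let (ω_k) satisfy ω_{k+1} = F(ω_k) for all k, ω_k ≠ ω* for all k, and ω_k → ω*; set p_k := ω_k − ω*. If (I − (1/γ)H)(p_k/‖p_k‖) converges to some w ∈ span{u}, then ‖p_{k+1}‖/‖p_k‖ → 0 as k → ∞ (superlinear convergence). -/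

import Mathlib

open scoped RealInnerProductSpace

/-- **Superlinear convergence in the degenerate case.** For the fixed-point iteration
`ω_{k+1} = F(ω_k) → ω*` whose Jacobian at `ω*` is `Π∘(I − H/γ)` with `Π = I − uuᵀ`,
if `(I − H/γ)` applied to the unit error directions converges to a limit in `span{u}`,
then `‖p_{k+1}‖/‖p_k‖ → 0`, where `p_k = ω_k − ω*`. -/
theorem stmt_15 {d : ℕ} (γ : ℝ) (hγ : 0 < γ)
    (F : EuclideanSpace ℝ (Fin d) → EuclideanSpace ℝ (Fin d))
    (ωs : EuclideanSpace ℝ (Fin d))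
    (hF : ∃ U ∈ nhds ωs, ContDiffOn ℝ 1 F U) (hfix : F ωs = ωs)
    (u : EuclideanSpace ℝ (Fin d)) (hu : ‖u‖ = 1)
    (H : EuclideanSpace ℝ (Fin d) →L[ℝ] EuclideanSpace ℝ (Fin d))
    (hHsym : ∀ x y, ⟪H x, y⟫ = ⟪x, H y⟫)
    (hJ : ∀ p, fderiv ℝ F ωs p =
      (p - (1 / γ) • H p) - ⟪u, p - (1 / γ) • H p⟫ • u)
    (ω : ℕ → EuclideanSpace ℝ (Fin d))
    (hiter : ∀ k, ω (k + 1) = F (ω k)) (hne : ∀ k, ω k ≠ ωs)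
    (hconv : Filter.Tendsto ω Filter.atTop (nhds ωs))
    (w : EuclideanSpace ℝ (Fin d)) (hw : w ∈ Submodule.span ℝ {u})
    (hlim : Filter.Tendsto
      (fun k => ‖ω k - ωs‖⁻¹ • (ω k - ωs) - (1 / γ) • H (‖ω k - ωs‖⁻¹ • (ω k - ωs)))
      Filter.atTop (nhds w)) :
    Filter.Tendsto (fun k => ‖ω (k + 1) - ωs‖ / ‖ω k - ωs‖)
      Filter.atTop (nhds 0) := by
  classical
  set A := fderiv ℝ F ωs with hAdef
  obtain ⟨U, hU, hcd⟩ := hF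
  have hDiff : HasFDerivAt F A ωs :=
    ((hcd.contDiffAt hU).differentiableAt one_ne_zero).hasFDerivAt
  have hpne : ∀ k, ‖ω k - ωs‖ ≠ 0 := fun k =>
    norm_ne_zero_iff.2 (sub_ne_zero.2 (hne k))
  -- little-o from differentiability composed along the sequence
  have hlo : (fun k => ω (k+1) - ωs - A (ω k - ωs)) =o[Filter.atTop]
      (fun k => ω k - ωs) := by
    have h := hDiff.isLittleO.comp_tendsto hconv
    simp only [Function.comp_def, hfix] at h
    have heq : (fun k => F (ω k) - ωs - A (ω k - ωs)) =
        (fun k => ω (k+1) - ωs - A (ω k - ωs)) := by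
      funext k; rw [hiter k]
    rwa [heq] at h
  have h1 : Filter.Tendsto (fun k => ‖ω (k+1) - ωs - A (ω k - ωs)‖ / ‖ω k - ωs‖)
      Filter.atTop (nhds 0) := by
    rw [← Asymptotics.isLittleO_iff_tendsto (fun k hk => absurd hk (hpne k))]
    exact hlo.norm_norm
  -- the Jacobian kills the limiting direction
  have h2 : Filter.Tendsto (fun k => A (‖ω k - ωs‖⁻¹ • (ω k - ωs)))
      Filter.atTop (nhds 0) := by
    obtain ⟨c, hc⟩ := Submodule.mem_span_singleton.1 hw
    have hw0 : w - ⟪u, w⟫ • u = 0 := by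
      rw [← hc, real_inner_smul_right, real_inner_self_eq_norm_sq, hu]
      simp
    have hcont : Continuous (fun v : EuclideanSpace ℝ (Fin d) => v - ⟪u, v⟫ • u) := by
      exact continuous_id.sub
        (((continuous_const : Continuous fun _ => u).inner (𝕜 := ℝ) continuous_id).smul
          continuous_const)
    have h := (hcont.tendsto w).comp hlim
    simp only [Function.comp_def] at h
    rw [hw0] at h
    have heq : (fun k => A (‖ω k - ωs‖⁻¹ • (ω k - ωs))) =
        (fun k =>
          (‖ω k - ωs‖⁻¹ • (ω k - ωs) - (1/γ) • H (‖ω k - ωs‖⁻¹ • (ω k - ωs))) -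
          ⟪u, ‖ω k - ωs‖⁻¹ • (ω k - ωs) - (1/γ) • H (‖ω k - ωs‖⁻¹ • (ω k - ωs))⟫ • u) := by
      funext k; exact hJ _
    rw [heq]; exact h
  -- squeeze
  have hbound : ∀ k, ‖ω (k+1) - ωs‖ / ‖ω k - ωs‖ ≤
      ‖ω (k+1) - ωs - A (ω k - ωs)‖ / ‖ω k - ωs‖ + ‖A (‖ω k - ωs‖⁻¹ • (ω k - ωs))‖ := by
    intro k
    have hApk : A (ω k - ωs) = ‖ω k - ωs‖ • A (‖ω k - ωs‖⁻¹ • (ω k - ωs)) := by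
      rw [← A.map_smul, smul_smul, mul_inv_cancel₀ (hpne k), one_smul]
    have hn : ‖A (ω k - ωs)‖ = ‖ω k - ωs‖ * ‖A (‖ω k - ωs‖⁻¹ • (ω k - ωs))‖ := by
      rw [hApk, norm_smul, Real.norm_eq_abs, abs_of_nonneg (norm_nonneg _)]
    have htri : ‖ω (k+1) - ωs‖ ≤
        ‖ω (k+1) - ωs - A (ω k - ωs)‖ + ‖A (ω k - ωs)‖ := by
      calc ‖ω (k+1) - ωs‖ = ‖(ω (k+1) - ωs - A (ω k - ωs)) + A (ω k - ωs)‖ := by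
            rw [sub_add_cancel]
        _ ≤ _ := norm_add_le _ _
    have hpos : (0:ℝ) < ‖ω k - ωs‖ := lt_of_le_of_ne (norm_nonneg _) (Ne.symm (hpne k))
    rw [div_le_iff₀ hpos]
    calc ‖ω (k+1) - ωs‖ ≤ ‖ω (k+1) - ωs - A (ω k - ωs)‖ + ‖A (ω k - ωs)‖ := htri
      _ = ‖ω (k+1) - ωs - A (ω k - ωs)‖ + ‖ω k - ωs‖ * ‖A (‖ω k - ωs‖⁻¹ • (ω k - ωs))‖ := by
            rw [hn]
      _ = (‖ω (k+1) - ωs - A (ω k - ωs)‖ / ‖ω k - ωs‖ +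
            ‖A (‖ω k - ωs‖⁻¹ • (ω k - ωs))‖) * ‖ω k - ωs‖ := by
            field_simp
  have hg : Filter.Tendsto (fun k =>
      ‖ω (k+1) - ωs - A (ω k - ωs)‖ / ‖ω k - ωs‖ +
      ‖A (‖ω k - ωs‖⁻¹ • (ω k - ωs))‖) Filter.atTop (nhds 0) := by
    have := h1.add (h2.norm)
    simpa using this
  exact squeeze_zero (fun k => div_nonneg (norm_nonneg _) (norm_nonneg _)) hbound hg
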